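/- Let $R$ be a finite product of finite fields of characteristic an odd prime $p$, with a ring involution $\dagger$, and let $H$ be a finite $R$-module equipped with a non-degenerate, skew-symmetric, $\mathbb{F}_p$-bilinear pairing $[\cdot,\cdot]': H \times H \to \mathbb{F}_p$ satisfying $[ru,w]' = [u,rw]'$ for all $r \in R$. Then each component of $\mathrm{rk}_R H$ is even, i.e. writing $R = \bigoplus_i R_i$, $\dim_{R_i}(H \otimes_R R_i)$ is even for every $i$. -/

import Mathlib

open TensorProduct

lemma aux_even_of_skew {K V : Type*} [Field K] [AddCommGroup V] [Module K V]
    [FiniteDimensional K V] (h2 : (2 : K) ≠ 0)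
    (B : LinearMap.BilinForm K V) (hnd : B.Nondegenerate)
    (hsk : ∀ x y : V, B y x = - B x y) :
    Even (Module.finrank K V) := by
  classical
  by_contra hne
  rw [Nat.not_even_iff_odd] at hne
  set n := Module.finrank K V with hn
  let b : Module.Basis (Fin n) K V := Module.finBasis K V
  have hdet := (LinearMap.BilinForm.nondegenerate_iff_det_ne_zero b).mp hnd
  set M := LinearMap.BilinForm.toMatrix b B with hM
  have hT : M.transpose = -M := by
    ext j k
    simp only [Matrix.transpose_apply, Matrix.neg_apply, hM,
      LinearMap.BilinForm.toMatrix_apply]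
    exact hsk _ _
  have h1 : M.det = - M.det := by
    conv_lhs => rw [← Matrix.det_transpose, hT]
    rw [Matrix.det_neg, Fintype.card_fin, hne.neg_one_pow, neg_one_mul]
  have h2' : (2 : K) * M.det = 0 := by linear_combination h1
  exact hdet ((mul_eq_zero.mp h2').resolve_left h2)

lemma aux_even (p : ℕ) [Fact p.Prime] (hodd : Odd p)
    (K : Type*) [Field K] [Finite K] [CharP K p]
    (V : Type*) [AddCommGroup V] [Module K V] [Module.Finite K V]
    (P : V →+ V →+ ZMod p)
    (hnd : ∀ x : V, (∀ y : V, P x y = 0) → x = 0)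
    (hsk : ∀ x y : V, P y x = - P x y)
    (hbal : ∀ (a : K) (x y : V), P (a • x) y = P x (a • y)) :
    Even (Module.finrank K V) := by
  classical
  letI : Algebra (ZMod p) K := ZMod.algebra K p
  haveI : Algebra.IsAlgebraic (ZMod p) K := Algebra.IsAlgebraic.of_finite _ _
  have tnd : (Algebra.traceForm (ZMod p) K).Nondegenerate :=
    traceForm_nondegenerate (ZMod p) K
  have hsmul : ∀ (c : ZMod p) (r : K) (x : V), (c • r) • x = c.val • (r • x) := by
    intro c r x
    show ((ZMod.cast c : K) * r) • x = _
    rw [← ZMod.natCast_val, mul_smul, Nat.cast_smul_eq_nsmul]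
  have hPn : ∀ (n : ℕ) (z y : V), P (n • z) y = (n : ZMod p) * P z y := by
    intro n z y
    rw [map_nsmul, AddMonoidHom.nsmul_apply, nsmul_eq_mul]
  -- the dual functional attached to (x, y)
  let L : V → V → Module.Dual (ZMod p) K := fun x y =>
    { toFun := fun r => P (r • x) y
      map_add' := fun r s => by
        show P ((r + s) • x) y = P (r • x) y + P (s • x) y
        rw [add_smul, map_add, AddMonoidHom.add_apply]
      map_smul' := fun c r => by
        show P ((c • r) • x) y = c • P (r • x) y
        rw [hsmul, hPn, ZMod.natCast_val, ZMod.cast_id, smul_eq_mul] }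
  have hbu : ∀ x y : V, ∃ s : K, ∀ r : K,
      Algebra.trace (ZMod p) K (s * r) = P (r • x) y := by
    intro x y
    refine ⟨((Algebra.traceForm (ZMod p) K).toDual tnd).symm (L x y), fun r => ?_⟩
    have := LinearMap.BilinForm.apply_toDual_symm_apply (B := Algebra.traceForm (ZMod p) K)
      (hB := tnd) (L x y) r
    rwa [Algebra.traceForm_apply] at this
  choose b hb using hbu
  have hu : ∀ (s s' : K),
      (∀ r, Algebra.trace (ZMod p) K (s * r) = Algebra.trace (ZMod p) K (s' * r)) → s = s' := by
    intro s s' h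
    have h0 : ∀ r, Algebra.traceForm (ZMod p) K (s - s') r = 0 := fun r => by
      rw [Algebra.traceForm_apply, sub_mul, map_sub, h r, sub_self]
    exact sub_eq_zero.mp (tnd.1 _ h0)
  have hu' : ∀ (x y : V) (s : K),
      (∀ r, Algebra.trace (ZMod p) K (s * r) = P (r • x) y) → s = b x y := by
    intro x y s h
    exact hu s (b x y) fun r => by rw [h r, hb]
  have hadd1 : ∀ x x' y : V, b (x + x') y = b x y + b x' y := by
    intro x x' y
    refine (hu' (x + x') y _ fun r => ?_).symm
    rw [add_mul, map_add, hb, hb, smul_add, map_add, AddMonoidHom.add_apply]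
  have hsmul1 : ∀ (a : K) (x y : V), b (a • x) y = a * b x y := by
    intro a x y
    refine (hu' (a • x) y _ fun r => ?_).symm
    rw [show a * b x y * r = b x y * (r * a) by ring, hb, mul_smul]
  have hadd2 : ∀ x y y' : V, b x (y + y') = b x y + b x y' := by
    intro x y y'
    refine (hu' x (y + y') _ fun r => ?_).symm
    rw [add_mul, map_add, hb, hb, map_add]
  have hsmul2 : ∀ (a : K) (x y : V), b x (a • y) = a * b x y := by
    intro a x y
    refine (hu' x (a • y) _ fun r => ?_).symm
    rw [show a * b x y * r = b x y * (r * a) by ring, hb, mul_comm r a, mul_smul, hbal]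
  let B : LinearMap.BilinForm K V := LinearMap.mk₂ K b hadd1
    (fun a x y => by rw [hsmul1, smul_eq_mul]) hadd2 (fun a x y => by rw [hsmul2, smul_eq_mul])
  have hBapp : ∀ x y : V, B x y = b x y := fun x y => rfl
  have Bnd : B.Nondegenerate := by
    refine LinearMap.BilinForm.Nondegenerate.ofSeparatingLeft ?_
    intro x hx
    refine hnd x fun y => ?_
    have h1 : P ((1 : K) • x) y = Algebra.trace (ZMod p) K (b x y * 1) := (hb x y 1).symm
    rw [one_smul] at h1
    have hbxy : b x y = 0 := hx y
    rw [h1, hbxy, zero_mul, map_zero]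
  have Bsk : ∀ x y : V, B y x = - B x y := by
    intro x y
    show b y x = - b x y
    have : - b x y = b y x := by
      refine hu' y x _ fun r => ?_
      rw [neg_mul, map_neg, hb, hsk x (r • y), hbal]
    exact this.symm
  have h2K : (2 : K) ≠ 0 := by
    intro h
    have h2 : ((2 : ℕ) : K) = 0 := by exact_mod_cast h
    have := (CharP.cast_eq_zero_iff K p 2).mp h2
    have hp2 : p = 2 := ((Nat.prime_dvd_prime_iff_eq Fact.out Nat.prime_two).mp this)
    rw [hp2] at hodd
    simp [Nat.odd_iff] at hodd
  exact aux_even_of_skew h2K B Bnd Bsk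
/-- Let `R ≅ ⊕ᵢ Rᵢ` be a finite product of finite fields of odd
characteristic `p`, with ring involution `†`, and `H` a finite `R`-module with a
non-degenerate, skew-symmetric, `𝔽_p`-bilinear pairing `[·,·]'` satisfying
`[ru, w]' = [u, rw]'`.  Then every component of `rk_R H` is even:
`dim_{Rᵢ}(H ⊗_R Rᵢ)` is even for every `i`. -/
theorem stmt_12 (ι : Type*) [Fintype ι] (p : ℕ) [Fact p.Prime] (hodd : Odd p)
    (Ri : ι → Type*) [∀ i, Field (Ri i)] [∀ i, Finite (Ri i)] [∀ i, CharP (Ri i) p]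
    (R : Type*) [CommRing R] [∀ i, Algebra R (Ri i)]
    (hiso : Function.Bijective fun (r : R) (i : ι) => algebraMap R (Ri i) r)
    (dag : R ≃+* R) (hinv : ∀ r : R, dag (dag r) = r)
    (H : Type*) [AddCommGroup H] [Module R H] [Finite H]
    (pair : H →+ H →+ ZMod p)
    (hnd : ∀ x : H, (∀ y : H, pair x y = 0) → x = 0)
    (hskew : ∀ x y : H, pair y x = - pair x y)
    (hbal : ∀ (r : R) (u w : H), pair (r • u) w = pair u (r • w)) :
    ∀ i, Even (Module.finrank (Ri i) (Ri i ⊗[R] H)) := by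
  classical
  intro i
  haveI : Module.Finite R H := Module.Finite.of_finite
  let ψ : R ≃+* (∀ j, Ri j) :=
    RingEquiv.ofBijective (Pi.ringHom fun j => algebraMap R (Ri j)) hiso
  have hψ : ∀ (r : R) (j : ι), ψ r j = algebraMap R (Ri j) r := fun r j => rfl
  let σ : Ri i → R := fun x => ψ.symm (Pi.single i x)
  have hψσ : ∀ x, ψ (σ x) = Pi.single i x := fun x => ψ.apply_symm_apply _
  have hσ_add : ∀ x y, σ (x + y) = σ x + σ y := by
    intro x y
    apply ψ.injective
    rw [map_add, hψσ, hψσ, hψσ, Pi.single_add]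
  have hσ_mul : ∀ x y, σ (x * y) = σ x * σ y := by
    intro x y
    apply ψ.injective
    rw [map_mul, hψσ, hψσ, hψσ, Pi.single_mul]
  have halg : ∀ x, algebraMap R (Ri i) (σ x) = x := by
    intro x
    have h := congrFun (hψσ x) i
    rwa [hψ, Pi.single_eq_same] at h
  have hσ_smul : ∀ (t : R) (x : Ri i), σ (t • x) = t * σ x := by
    intro t x
    apply ψ.injective
    rw [map_mul, hψσ, hψσ]
    funext j
    rcases eq_or_ne j i with rfl | hne
    · rw [Pi.single_eq_same, Pi.mul_apply, Pi.single_eq_same, hψ, Algebra.smul_def]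
    · rw [Pi.single_eq_of_ne hne, Pi.mul_apply, Pi.single_eq_of_ne hne, mul_zero]
  have he_mul : ∀ x : Ri i, σ 1 * σ x = σ x := fun x => by rw [← hσ_mul, one_mul]
  -- the additive map Φ : Ri i ⊗ H →+ (H →+ ZMod p)
  let F : Ri i →+ H →+ (H →+ ZMod p) :=
    AddMonoidHom.mk' (fun r => AddMonoidHom.mk'
        (fun u => pair (σ r • u)) (fun u u' => by
          show pair (σ r • (u + u')) = pair (σ r • u) + pair (σ r • u')
          rw [smul_add, map_add]))
      (fun r r' => by
        ext u w
        show pair (σ (r + r') • u) w = pair (σ r • u) w + pair (σ r' • u) w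
        rw [hσ_add, add_smul, map_add, AddMonoidHom.add_apply])
  have hF : ∀ (t : R) (r : Ri i) (u : H), F (t • r) u = F r (t • u) := by
    intro t r u
    show pair (σ (t • r) • u) = pair (σ r • (t • u))
    rw [hσ_smul, mul_comm, mul_smul]
  let Φ : (Ri i ⊗[R] H) →+ (H →+ ZMod p) := TensorProduct.liftAddHom F hF
  have hΦ : ∀ (r : Ri i) (u : H), Φ (r ⊗ₜ u) = pair (σ r • u) := fun r u =>
    TensorProduct.liftAddHom_tmul F hF r u
  -- the pairing P on Ri i ⊗ H
  let G : (Ri i ⊗[R] H) → (Ri i →+ H →+ ZMod p) := fun x =>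
    AddMonoidHom.mk' (fun s => (Φ x).comp (DistribMulAction.toAddMonoidHom H (σ s)))
      (fun s s' => by
        ext w
        show Φ x (σ (s + s') • w) = Φ x (σ s • w) + Φ x (σ s' • w)
        rw [hσ_add, add_smul, map_add])
  have hG : ∀ (x : Ri i ⊗[R] H) (t : R) (s : Ri i) (w : H),
      G x (t • s) w = G x s (t • w) := by
    intro x t s w
    show Φ x (σ (t • s) • w) = Φ x (σ s • (t • w))
    rw [hσ_smul, mul_comm, mul_smul]
  let P : (Ri i ⊗[R] H) →+ (Ri i ⊗[R] H) →+ ZMod p :=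
    AddMonoidHom.mk' (fun x => TensorProduct.liftAddHom (G x) (hG x))
      (fun x x' => AddMonoidHom.ext fun y => by
        induction y using TensorProduct.induction_on with
        | zero => simp
        | tmul s w =>
          rw [AddMonoidHom.add_apply, TensorProduct.liftAddHom_tmul,
            TensorProduct.liftAddHom_tmul, TensorProduct.liftAddHom_tmul]
          show Φ (x + x') (σ s • w) = Φ x (σ s • w) + Φ x' (σ s • w)
          rw [map_add, AddMonoidHom.add_apply]
        | add y₁ y₂ h1 h2 =>
          simp only [map_add, AddMonoidHom.add_apply] at h1 h2 ⊢
          rw [h1, h2]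
          try abel)
  have hP : ∀ (r : Ri i) (u : H) (s : Ri i) (w : H),
      P (r ⊗ₜ u) (s ⊗ₜ w) = pair (σ r • u) (σ s • w) := by
    intro r u s w
    show TensorProduct.liftAddHom (G (r ⊗ₜ u)) (hG _) (s ⊗ₜ w) = _
    rw [TensorProduct.liftAddHom_tmul]
    show Φ (r ⊗ₜ u) (σ s • w) = _
    rw [hΦ]
  have htm : ∀ (s : Ri i) (u : H), (s ⊗ₜ[R] u : Ri i ⊗[R] H) = 1 ⊗ₜ (σ s • u) := by
    intro s u
    conv_rhs => rw [← TensorProduct.smul_tmul]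
    rw [Algebra.smul_def, mul_one, halg]
  have hrep : ∀ x : Ri i ⊗[R] H, ∃ u, x = 1 ⊗ₜ u := by
    intro x
    induction x using TensorProduct.induction_on with
    | zero => exact ⟨0, (TensorProduct.tmul_zero _ _).symm⟩
    | tmul s u => exact ⟨σ s • u, htm s u⟩
    | add y z hy hz =>
      obtain ⟨u, rfl⟩ := hy
      obtain ⟨v, rfl⟩ := hz
      exact ⟨u + v, (TensorProduct.tmul_add _ _ _).symm⟩
  have hsc : ∀ (s : Ri i) (u : H),
      s • ((1 : Ri i) ⊗ₜ[R] u) = (1 : Ri i) ⊗ₜ[R] (σ s • u) := by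
    intro s u
    rw [TensorProduct.smul_tmul', smul_eq_mul, mul_one, htm]
  have he_act : ∀ u : H, ((1 : Ri i) ⊗ₜ[R] (σ 1 • u) : Ri i ⊗[R] H) = 1 ⊗ₜ u := by
    intro u
    rw [TensorProduct.tmul_smul, TensorProduct.smul_tmul', Algebra.smul_def, mul_one, halg]
  -- hypotheses of aux_even
  have Pnd : ∀ x : Ri i ⊗[R] H, (∀ y, P x y = 0) → x = 0 := by
    intro x hx
    obtain ⟨u, rfl⟩ := hrep x
    have h1 : ∀ w, pair (σ 1 • u) w = 0 := by
      intro w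
      have h2 := hx (1 ⊗ₜ w)
      rw [hP] at h2
      have h3 : pair (σ 1 • u) w = pair (σ 1 • u) (σ 1 • w) := by
        conv_lhs => rw [← he_mul 1, mul_smul]
        exact hbal _ _ _
      rw [h3, h2]
    have h0 : σ 1 • u = 0 := hnd _ h1
    rw [← he_act u, h0, TensorProduct.tmul_zero]
  have Psk : ∀ x y : Ri i ⊗[R] H, P y x = - P x y := by
    intro x y
    obtain ⟨u, rfl⟩ := hrep x
    obtain ⟨w, rfl⟩ := hrep y
    rw [hP, hP]
    exact hskew _ _
  have Pbal : ∀ (a : Ri i) (x y : Ri i ⊗[R] H), P (a • x) y = P x (a • y) := by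
    intro a x y
    obtain ⟨u, rfl⟩ := hrep x
    obtain ⟨w, rfl⟩ := hrep y
    rw [hsc, hsc, hP, hP, smul_smul, smul_smul, he_mul, hbal, hbal,
      smul_smul, smul_smul, mul_comm (σ a) (σ 1)]
  exact aux_even p hodd (Ri i) (Ri i ⊗[R] H) P Pnd Psk Pbal
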